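/- As n → ∞ through even integers, Ā_n = (n/2)·sin(π/n) − ((n−1)/2)·tan(π/(2n−2)) satisfies Ā_n = π/4 − 5π³/(48n²) − π³/(24n³) + O(1/n⁴); i.e., there exist constants C and N such that |Ā_n − π/4 + 5π³/(48n²) + π³/(24n³)| ≤ C/n⁴ for all n ≥ N. -/

import Mathlib

open Real Complex Finset

lemma sin_quintic_bound {x : ℝ} (hx : |x| ≤ 1) :
    |Real.sin x - (x - x ^ 3 / 6)| ≤ |x| ^ 5 * (1 / 50) := by
  have h6 : |Real.sin x - (x - x ^ 3 / 6 + x ^ 5 / 120)| ≤ |x| ^ 6 * (7 / 4320) := by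
    calc
      |Real.sin x - (x - x ^ 3 / 6 + x ^ 5 / 120)|
          = ‖Complex.sin x - (x - x ^ 3 / 6 + x ^ 5 / 120 : ℝ)‖ := by
        rw [← Real.norm_eq_abs, ← Complex.norm_real]; simp
      _ = ‖((Complex.exp (-x * I) - ∑ m ∈ range 6, (-x * I) ^ m / m.factorial) -
                (Complex.exp (x * I) - ∑ m ∈ range 6, (x * I) ^ m / m.factorial)) * I / 2‖ := by
        congr 1
        simp only [Complex.sin, Finset.sum_range_succ, range_zero, sum_empty]
        push_cast
        norm_num [Nat.factorial]
        ring_nf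
        rw [show (I:ℂ)^2 = -1 from Complex.I_sq,
            show (I:ℂ)^4 = 1 by rw [show (4:ℕ)=2*2 from rfl, pow_mul, Complex.I_sq]; norm_num,
            show (I:ℂ)^6 = -1 by rw [show (6:ℕ)=2*3 from rfl, pow_mul, Complex.I_sq]; norm_num]
        ring
      _ ≤ ‖(Complex.exp (-x * I) - ∑ m ∈ range 6, (-x * I) ^ m / m.factorial) * I / 2‖ +
          ‖-((Complex.exp (x * I) - ∑ m ∈ range 6, (x * I) ^ m / m.factorial) * I) / 2‖ := by
        rw [sub_mul, sub_eq_add_neg, add_div]; exact norm_add_le _ _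
      _ = ‖Complex.exp (x * I) - ∑ m ∈ range 6, (x * I) ^ m / m.factorial‖ / 2 +
          ‖Complex.exp (-x * I) - ∑ m ∈ range 6, (-x * I) ^ m / m.factorial‖ / 2 := by
        simp [add_comm, map_div₀]
      _ ≤ ‖(x : ℂ) * I‖ ^ 6 * (Nat.succ 6 * (Nat.factorial 6 * (6 : ℕ) : ℝ)⁻¹) / 2 +
          ‖-(x : ℂ) * I‖ ^ 6 * (Nat.succ 6 * (Nat.factorial 6 * (6 : ℕ) : ℝ)⁻¹) / 2 := by
        gcongr
        · exact Complex.exp_bound (by simpa) (by decide)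
        · exact Complex.exp_bound (by simpa) (by decide)
      _ ≤ |x| ^ 6 * (7 / 4320) := by norm_num [Nat.factorial]
  have h5 : |x| ^ 6 ≤ |x| ^ 5 := pow_le_pow_of_le_one (abs_nonneg x) hx (by norm_num)
  calc |Real.sin x - (x - x ^ 3 / 6)|
      ≤ |Real.sin x - (x - x ^ 3 / 6 + x ^ 5 / 120)| + |x ^ 5 / 120| := by
        
        have := abs_sub_abs_le_abs_sub (Real.sin x - (x - x ^ 3 / 6)) (x ^ 5 / 120)
        have h := abs_sub (Real.sin x - (x - x ^ 3 / 6)) (x ^ 5 / 120)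
        calc |Real.sin x - (x - x ^ 3 / 6)|
            = |(Real.sin x - (x - x ^ 3 / 6 + x ^ 5 / 120)) + x ^ 5 / 120| := by ring_nf
          _ ≤ _ := abs_add_le _ _
    _ ≤ |x| ^ 6 * (7 / 4320) + |x| ^ 5 / 120 := by
        rw [_root_.abs_div, _root_.abs_pow]; gcongr <;> norm_num
    _ ≤ |x| ^ 5 * (1 / 50) := by nlinarith [abs_nonneg x, pow_nonneg (abs_nonneg x) 5]


lemma tan_quintic_bound {x : ℝ} (h0 : 0 ≤ x) (hx : x ≤ 1/2) :
    |Real.tan x - (x + x ^ 3 / 3)| ≤ x ^ 5 := by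
  have hax : |x| ≤ 1 := by rw [_root_.abs_of_nonneg h0]; linarith
  have hs := sin_quintic_bound hax
  have hc := Real.cos_bound hax
  rw [_root_.abs_of_nonneg h0] at hs hc
  have e1 := abs_le.1 hs
  have e2 := abs_le.1 hc
  have hx2 : x^2 ≤ 1/4 := by nlinarith
  have hcos : (1:ℝ)/2 ≤ Real.cos x := by nlinarith
  have hcpos : 0 < Real.cos x := by linarith
  have heq : Real.tan x - (x + x ^ 3 / 3)
      = (Real.sin x - (x + x ^ 3 / 3) * Real.cos x) / Real.cos x := by
    rw [Real.tan_eq_sin_div_cos]; field_simp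
  rw [heq, abs_div, abs_of_pos hcpos, div_le_iff₀ hcpos]
  have h1 : |Real.sin x - (x + x^3/3) * Real.cos x| ≤ x^5 / 2 := by
    rw [abs_le]
    constructor <;> nlinarith [pow_nonneg h0 5, pow_nonneg h0 3, pow_nonneg h0 4,
      mul_le_mul_of_nonneg_left hx2 (pow_nonneg h0 3),
      mul_le_mul_of_nonneg_left hx2 (pow_nonneg h0 5)]
  nlinarith [pow_nonneg h0 5]


set_option maxHeartbeats 1000000 in
lemma fs_aux (nr : ℝ) (h10 : (10:ℝ) ≤ nr) :
      |(nr / 2 * Real.sin (π / nr) - (nr - 1) / 2 * Real.tan (π / (2 * nr - 2)))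
        - π / 4 + 5 * π ^ 3 / (48 * nr ^ 2) + π ^ 3 / (24 * nr ^ 3)| ≤ 1000 / nr ^ 4 := by
  have hm : (9:ℝ) ≤ nr - 1 := by linarith
  have hnr0 : (0:ℝ) < nr := by linarith
  have hm0 : (0:ℝ) < nr - 1 := by linarith
  have hd0 : (2:ℝ) * nr - 2 ≠ 0 := by intro h; nlinarith
  have hπ : π < 3.15 := pi_lt_d2
  have hπ0 : 0 < π := pi_pos
  set m : ℝ := nr - 1 with hmd
  set a : ℝ := π / nr with ha
  set b : ℝ := π / (2 * nr - 2) with hb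
  have hbm : b = π / (2 * m) := by rw [hb, hmd]; ring_nf
  set E1 : ℝ := nr / 2 * Real.sin a - (π / 2 - π ^ 3 / (12 * nr ^ 2)) with hE1d
  set E2 : ℝ := m / 2 * Real.tan b - (π / 4 + π ^ 3 / (48 * m ^ 2)) with hE2d
  set E3 : ℝ := -(π ^ 3 / 48 * (3 * nr - 2) / (nr ^ 3 * m ^ 2)) with hE3d
  clear_value m a b E1 E2 E3
  have hm1 : nr - 1 ≠ 0 := by intro h; nlinarith
  have hn1 : nr ≠ 0 := ne_of_gt hnr0
  have key : nr / 2 * Real.sin a - m / 2 * Real.tan b - π / 4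
        + 5 * π ^ 3 / (48 * nr ^ 2) + π ^ 3 / (24 * nr ^ 3) = E1 - E2 + E3 := by
    rw [hE1d, hE2d, hE3d, ha, hbm, hmd]
    field_simp
    ring
  rw [key]
  -- bound E1
  have ha1 : |a| ≤ 1 := by
    rw [ha, abs_of_pos (by positivity)]
    rw [div_le_one hnr0]; linarith
  have hs := sin_quintic_bound ha1
  have hE1 : |E1| ≤ 4 / nr ^ 4 := by
    have heq : E1 = nr / 2 * (Real.sin a - (a - a ^ 3 / 6)) := by
      rw [hE1d, ha]; field_simp; ring
    rw [heq, abs_mul, abs_of_pos (by positivity : (0:ℝ) < nr / 2)]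
    calc nr / 2 * |Real.sin a - (a - a ^ 3 / 6)| ≤ nr / 2 * (|a| ^ 5 * (1 / 50)) := by
          gcongr
      _ = nr / 2 * ((π / nr) ^ 5 * (1 / 50)) := by
          rw [ha, abs_of_pos (by positivity)]
      _ = π ^ 5 / (100 * nr ^ 4) := by field_simp; ring
      _ ≤ 4 / nr ^ 4 := by
          rw [div_le_div_iff₀ (by positivity) (by positivity)]
          have h2 : π ^ 5 ≤ 400 := le_trans (le_of_lt (pow_lt_pow_left₀ hπ hπ0.le (by norm_num))) (by norm_num)
          nlinarith [mul_le_mul_of_nonneg_right h2 (pow_nonneg hnr0.le 4)]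
  -- bound E2
  have hb0 : 0 ≤ b := by rw [hbm]; positivity
  have hb12 : b ≤ 1 / 2 := by
    rw [hbm, div_le_iff₀ (by linarith : (0:ℝ) < 2 * m)]; nlinarith
  have ht := tan_quintic_bound hb0 hb12
  have hE2 : |E2| ≤ 80 / nr ^ 4 := by
    have heq : E2 = m / 2 * (Real.tan b - (b + b ^ 3 / 3)) := by
      rw [hE2d, hbm]
      have hm0' : m ≠ 0 := ne_of_gt hm0
      field_simp
      ring
    rw [heq, abs_mul, abs_of_pos (by positivity : (0:ℝ) < m / 2)]
    calc m / 2 * |Real.tan b - (b + b ^ 3 / 3)| ≤ m / 2 * b ^ 5 := by gcongr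
      _ = m / 2 * (π / (2 * m)) ^ 5 := by rw [hbm]
      _ = π ^ 5 / (64 * m ^ 4) := by field_simp; ring
      _ ≤ 80 / nr ^ 4 := by
          rw [div_le_div_iff₀ (by positivity) (by positivity)]
          have hnm : nr ≤ 2 * m := by rw [hmd]; linarith
          have h1 : nr ^ 4 ≤ 16 * m ^ 4 := by
            calc nr ^ 4 ≤ (2 * m) ^ 4 := pow_le_pow_left₀ (by linarith : (0:ℝ) ≤ nr) hnm 4
              _ = 16 * m ^ 4 := by ring
          have h2 : π ^ 5 ≤ 320 :=
            le_trans (le_of_lt (pow_lt_pow_left₀ hπ hπ0.le (by norm_num))) (by norm_num)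
          nlinarith [mul_le_mul_of_nonneg_right h2 (pow_nonneg hnr0.le 4),
            mul_le_mul_of_nonneg_left h1 (by norm_num : (0:ℝ) ≤ 320)]
  -- bound E3
  have hE3 : |E3| ≤ 8 / nr ^ 4 := by
    rw [hE3d, abs_neg, _root_.abs_of_nonneg (div_nonneg (mul_nonneg (by positivity) (by linarith))
      (by positivity))]
    rw [div_le_div_iff₀ (by positivity) (by positivity)]
    have hnm : nr ≤ 2 * m := by rw [hmd]; linarith
    have h1 : nr ^ 2 ≤ 4 * m ^ 2 := by nlinarith
    have h2 : π ^ 3 ≤ 32 := le_trans (le_of_lt (pow_lt_pow_left₀ hπ hπ0.le (by norm_num))) (by norm_num)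
    calc π ^ 3 / 48 * (3 * nr - 2) * nr ^ 4 ≤ 32 / 48 * (3 * nr) * nr ^ 4 := by
          gcongr <;> linarith
      _ = 2 * nr ^ 5 := by ring
      _ ≤ 8 * (nr ^ 3 * m ^ 2) := by
          nlinarith [mul_le_mul_of_nonneg_left h1 (pow_nonneg hnr0.le 3)]
  calc |E1 - E2 + E3| ≤ |E1 - E2| + |E3| := abs_add_le _ _
    _ ≤ |E1| + |E2| + |E3| := by gcongr; exact abs_sub _ _
    _ ≤ 4 / nr ^ 4 + 80 / nr ^ 4 + 8 / nr ^ 4 := by gcongr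
    _ ≤ 1000 / nr ^ 4 := by
        rw [← add_div, ← add_div,
          div_le_div_iff₀ (by positivity) (by positivity)]
        nlinarith [pow_pos hnr0 4]


theorem foster_szabo_asymptotic :
    ∃ (C : ℝ) (N : ℕ), ∀ n : ℕ, N ≤ n → Even n →
      |((n : ℝ) / 2 * Real.sin (π / n) - ((n : ℝ) - 1) / 2 * Real.tan (π / (2 * n - 2)))
        - π / 4 + 5 * π ^ 3 / (48 * n ^ 2) + π ^ 3 / (24 * n ^ 3)| ≤ C / n ^ 4 := by
  refine ⟨1000, 10, fun n hn _ => fs_aux (n : ℝ) (by exact_mod_cast hn)⟩
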